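/- Let k be an algebraically closed field of characteristic zero, let a and b be positive integers, and let μ ∈ k with μ ≠ 0 and μ·(a+b)^{a+b} ≠ a^a·b^b. Then the polynomial X^a·(1−X)^b − μ ∈ k[X] is squarefree of degree a+b; in particular it has exactly a+b distinct roots in k. (Hence the map x ↦ x^a(1−x)^b is étale of degree a+b away from the fibers over 0 and over a^a·b^b/(a+b)^{a+b}.) -/

import Mathlib

open Polynomial Classical in

/-- Away from the fibers over `0` and over the critical value `a^a·b^b/(a+b)^{a+b}`,
the polynomial `X^a(1−X)^b − μ` is squarefree of degree `a+b`, hence has exactly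
`a+b` distinct roots; so `x ↦ x^a(1−x)^b` is étale of degree `a+b` there. -/
theorem pow_mul_one_sub_pow_sub_const_squarefree
    (k : Type*) [Field k] [IsAlgClosed k] [CharZero k]
    (a b : ℕ) (ha : 0 < a) (hb : 0 < b)
    (μ : k) (hμ : μ ≠ 0) (hμ' : μ * ((a : k) + b) ^ (a + b) ≠ (a : k) ^ a * (b : k) ^ b) :
    Squarefree (X ^ a * (1 - X) ^ b - C μ) ∧
      (X ^ a * (1 - X) ^ b - C μ : k[X]).natDegree = a + b ∧
      (X ^ a * (1 - X) ^ b - C μ : k[X]).roots.toFinset.card = a + b := by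
  obtain ⟨a', rfl⟩ : ∃ a', a = a' + 1 := ⟨a - 1, (Nat.succ_pred ha.ne').symm⟩
  obtain ⟨b', rfl⟩ : ∃ b', b = b' + 1 := ⟨b - 1, (Nat.succ_pred hb.ne').symm⟩
  set a := a' + 1
  set b := b' + 1
  set f : k[X] := X ^ a * (1 - X) ^ b - C μ with hf
  have hd1 : (1 - X : k[X]).natDegree = 1 := by
    rw [show (1 - X : k[X]) = -(X - C 1) by rw [map_one]; ring, natDegree_neg, natDegree_X_sub_C]
  have h1x : (1 - X : k[X]) ≠ 0 := fun h => by simp [h] at hd1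
  have hdeg : f.natDegree = a + b := by
    rw [hf, natDegree_sub_C, natDegree_mul (pow_ne_zero _ X_ne_zero) (pow_ne_zero _ h1x),
      natDegree_pow, natDegree_pow, natDegree_X, hd1, mul_one, mul_one]
  have hsep : f.Separable := by
    rw [Polynomial.separable_def, isCoprime_iff_aeval_ne_zero_of_isAlgClosed k k]
    intro z
    by_contra h
    push_neg at h
    obtain ⟨h1, h2⟩ := h
    simp only [hf, map_sub, map_mul, map_pow, aeval_X, aeval_C, map_one, aeval_one,
      sub_eq_zero] at h1
    have hz : z ^ a * (1 - z) ^ b = μ := h1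
    have hz0 : z ≠ 0 := by
      intro h0
      apply hμ
      rw [← hz, h0, zero_pow ha.ne', zero_mul]
    have hz1 : (1 : k) - z ≠ 0 := by
      intro h0
      apply hμ
      rw [← hz, h0, zero_pow hb.ne', mul_zero]
    simp only [hf, derivative_sub, derivative_C, derivative_mul, derivative_X_pow,
      derivative_pow, derivative_one, derivative_X, sub_zero, zero_sub, map_sub, map_add,
      map_mul, map_pow, map_neg, aeval_X, aeval_C, map_one, aeval_one, aeval_natCast] at h2
    -- h2 should now be an equation in z
    have key : (z ^ a' * (1 - z) ^ b') * ((a' + 1 : k) * (1 - z) - (b' + 1 : k) * z) = 0 := by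
      push_cast at h2 ⊢
      simp only [a, b, Nat.add_sub_cancel, pow_succ, Nat.cast_add, Nat.cast_one] at h2
      linear_combination h2
    have hE : (a' + 1 : k) * (1 - z) - (b' + 1 : k) * z = 0 := by
      rcases mul_eq_zero.mp key with h | h
      · exact absurd h (mul_ne_zero (pow_ne_zero _ hz0) (pow_ne_zero _ hz1))
      · exact h
    have hza : z * ((a : k) + b) = a := by simp only [a, b]; push_cast; linear_combination -hE
    have hzb : (1 - z) * ((a : k) + b) = b := by simp only [a, b]; push_cast; linear_combination hE
    apply hμ'
    calc μ * ((a : k) + b) ^ (a + b)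
        = (z * ((a : k) + b)) ^ a * ((1 - z) * ((a : k) + b)) ^ b := by
          rw [mul_pow, mul_pow, pow_add, ← hz]; ring
      _ = (a : k) ^ a * (b : k) ^ b := by rw [hza, hzb]
  refine ⟨hsep.squarefree, hdeg, ?_⟩
  have hnodup : f.roots.Nodup := nodup_roots hsep
  rw [Multiset.toFinset_card_of_nodup hnodup,
    (splits_iff_card_roots).mp (IsAlgClosed.splits f), hdeg]
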